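/- Let n ≥ 1, α ∈ (0,2), and β ∈ (0,n). There exists a constant C > 0 depending only on n, α, β such that for every (x,t) ∈ ℝ^{n+1}_+, ∫_{ℝ^n} p^α_t(y) |y−x|^{β−n} dy ≤ C (t² + |x|²)^{(β−n)/2}. -/

import Mathlib

open MeasureTheory ENNReal Set Filter

noncomputable section

abbrev En (n : ℕ) := EuclideanSpace ℝ (Fin n)

/-- The open upper half-space `ℝⁿ × (0,∞)`. -/
def upperHalf (n : ℕ) : Set (En n × ℝ) := {z | 0 < z.2}

/-- Poisson-type kernel `p^α_t(x) = c(n,α) t^α (|x|²+t²)^{-(n+α)/2}`. -/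
def poissonKernelPT (n : ℕ) (α t : ℝ) (x : En n) : ℝ :=
  (Real.Gamma (((n : ℝ) + α) / 2) / (Real.pi ^ ((n : ℝ) / 2) * Real.Gamma (α / 2))) *
    t ^ α / (‖x‖ ^ 2 + t ^ 2) ^ (((n : ℝ) + α) / 2)

/-- Caffarelli–Silvestre extension `P_α f(x,t) = ∫ p^α_t(x-y) f(y) dy`. -/
def csExt (n : ℕ) (α : ℝ) (f : En n → ℝ) (x : En n) (t : ℝ) : ℝ :=
  ∫ y, poissonKernelPT n α t (x - y) * f y

/-- The `L^p`-capacity `C^{α,p}(E)` associated with the Caffarelli–Silvestre extension. -/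
def capacity (n : ℕ) (α p : ℝ) (E : Set (En n × ℝ)) : ℝ :=
  sInf {c : ℝ | ∃ f : En n → ℝ, (∀ y, 0 ≤ f y) ∧ MemLp f (ENNReal.ofReal p) volume ∧
    (∀ z ∈ E, 1 ≤ csExt n α f z.1 z.2) ∧
    c = (eLpNorm f (ENNReal.ofReal p) volume).toReal ^ p}

/-- `c_{α,p}(μ;λ)`: infimum of capacities of compact sets of `μ`-measure at least `λ`. -/
def capMin (n : ℕ) (α p : ℝ) (μ : Measure (En n × ℝ)) (lam : ℝ) : ℝ≥0∞ :=
  ⨅ (K : Set (En n × ℝ)) (_ : IsCompact K ∧ K ⊆ upperHalf n ∧ ENNReal.ofReal lam ≤ μ K),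
    ENNReal.ofReal (capacity n α p K)

/-- The "parabolic" ball `B_r(x₀,t₀)`. -/
def pBall (n : ℕ) (x₀ : En n) (t₀ r : ℝ) : Set (En n × ℝ) :=
  {z | dist z.1 x₀ < r / 2 ∧ r < z.2 - t₀ ∧ z.2 - t₀ < 2 * r}

/-- Adjoint operator `P*_α μ(x) = ∫ p^α_t(x-z) dμ(z,t)`. -/
def dualPot (n : ℕ) (α : ℝ) (μ : Measure (En n × ℝ)) (x : En n) : ℝ≥0∞ :=
  ∫⁻ z, ENNReal.ofReal (poissonKernelPT n α z.2 (x - z.1)) ∂μ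

/-- Parabolic maximal function `Mμ(x) = sup_{r>0} r^{-n} μ(B_r(x,r))`. -/
def pMax (n : ℕ) (μ : Measure (En n × ℝ)) (x : En n) : ℝ≥0∞ :=
  ⨆ (r : ℝ) (_ : 0 < r), μ (pBall n x r r) / ENNReal.ofReal (r ^ (n : ℝ))

/-- Hedberg–Wolff potential `H_p μ(x,t) = ∫₀^∞ (r^{-n} μ(B_r(x,t)))^{p'-1} dr/r`, `p' = p/(p-1)`. -/
def wolff (n : ℕ) (p : ℝ) (μ : Measure (En n × ℝ)) (x : En n) (t : ℝ) : ℝ≥0∞ :=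
  ∫⁻ r in Set.Ioi (0 : ℝ),
    (μ (pBall n x t r) / ENNReal.ofReal (r ^ (n : ℝ))) ^ (p / (p - 1) - 1) / ENNReal.ofReal r

/-- Forward difference `Δ¹_h f(x) = f(x+h) - f(x)`. -/
def fwDiff (n : ℕ) (h : En n) (f : En n → ℝ) : En n → ℝ := fun x => f (x + h) - f x

/-- Iterated difference `Δ^k_h f`. -/
def iterDiff (n : ℕ) (k : ℕ) (h : En n) (f : En n → ℝ) : En n → ℝ := (fwDiff n h)^[k] f

/-- Fractional Laplacian `(-Δ)^{β/2} f`, via the Fourier transform. -/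
def fracLap (n : ℕ) (β : ℝ) (f : En n → ℝ) : En n → ℂ :=
  FourierTransformInv.fourierInv
    (fun ξ => (((2 * Real.pi * ‖ξ‖) ^ β : ℝ) : ℂ) * FourierTransform.fourier (fun x => (f x : ℂ)) ξ)

/-- Homogeneous Sobolev norm `‖f‖_{Ẇ^{β,p}(ℝⁿ)}`. -/
def sobolevNorm (n : ℕ) (β p : ℝ) (f : En n → ℝ) : ℝ :=
  if p = 1 ∨ p = (n : ℝ) / β then
    (∫ h : En n, (∫ x : En n, |iterDiff n (1 + ⌊β⌋₊) h f x| ^ p) / ‖h‖ ^ ((n : ℝ) + p * β)) ^ (1 / p)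
  else
    (∫ x : En n, ‖fracLap n β f x‖ ^ p) ^ (1 / p)

/-- Fractional capacity `Cap^{β,p}(S)`. -/
def fracCap (n : ℕ) (β p : ℝ) (S : Set (En n)) : ℝ :=
  sInf {c : ℝ | ∃ f : En n → ℝ, ContDiff ℝ (⊤ : ℕ∞) f ∧ HasCompactSupport f ∧ (∀ x, 0 ≤ f x) ∧
    (∀ x ∈ S, 1 ≤ f x) ∧ c = sobolevNorm n β p f ^ p}

/-- Tent `T(O) = {(x,r) ∈ ℝ^{n+1}_+ : B(x,r) ⊆ O}` over an open set `O ⊆ ℝⁿ`. -/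
def tent (n : ℕ) (O : Set (En n)) : Set (En n × ℝ) :=
  {z | 0 < z.2 ∧ Metric.ball z.1 z.2 ⊆ O}

/-- `c^β_p(μ;t)`: the `(p,β)`-fractional capacity minimizing function. -/
def fracCapMin (n : ℕ) (β p : ℝ) (μ : Measure (En n × ℝ)) (t : ℝ) : ℝ≥0∞ :=
  ⨅ (O : Set (En n)) (_ : IsOpen O ∧ Bornology.IsBounded O ∧ ENNReal.ofReal t < μ (tent n O)),
    ENNReal.ofReal (fracCap n β p O)

/-- Fractional perimeter `Per_β(E) = ∫_E ∫_{Eᶜ} |x-y|^{-n-β} dx dy`. -/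
def fracPer (n : ℕ) (β : ℝ) (E : Set (En n)) : ℝ≥0∞ :=
  ∫⁻ x in E, ∫⁻ y in Eᶜ, ENNReal.ofReal (‖x - y‖ ^ (-((n : ℝ) + β)))

namespace KernelRiesz

lemma my_lintegral_comp_smul {n : ℕ} (f : En n → ℝ≥0∞) (hf : Measurable f) {t : ℝ} (ht : t ≠ 0) :
    ∫⁻ y, f (t • y) = ENNReal.ofReal (|t| ^ n)⁻¹ * ∫⁻ y, f y := by
  rw [← lintegral_map hf (measurable_const_smul t), Measure.map_addHaar_smul volume ht,
    lintegral_smul_measure]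
  congr 2
  rw [finrank_euclideanSpace_fin, abs_inv, abs_pow]

lemma my_lintegral_comp_smul' {n : ℕ} (f : En n → ℝ≥0∞) (hf : Measurable f) {t : ℝ} (ht : t ≠ 0) :
    ∫⁻ y, f y = ENNReal.ofReal (|t| ^ n) * ∫⁻ y, f (t • y) := by
  rw [my_lintegral_comp_smul f hf ht, ← mul_assoc, ← ENNReal.ofReal_mul (by positivity),
    mul_inv_cancel₀ (by positivity), ENNReal.ofReal_one, one_mul]

lemma riesz_ball_lt_top {n : ℕ} (hn : 1 ≤ n) {β : ℝ} (hβ0 : 0 < β) (hβn : β < n) :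
    ∫⁻ y in Metric.ball (0 : En n) 1, ENNReal.ofReal (‖y‖ ^ (β - (n : ℝ))) < ∞ := by
  have hne : Nonempty (Fin n) := ⟨⟨0, hn⟩⟩
  have : Nontrivial (En n) := inferInstance
  set f : En n → ℝ≥0∞ := fun y => ENNReal.ofReal (‖y‖ ^ (β - (n : ℝ))) with hfdef
  set A : ℕ → Set (En n) := fun k =>
    Metric.closedBall (0 : En n) ((2:ℝ)⁻¹ ^ k) \ Metric.ball (0 : En n) ((2:ℝ)⁻¹ ^ (k+1)) with hA
  have hsub : Metric.ball (0 : En n) 1 ⊆ {(0:En n)} ∪ ⋃ k, A k := by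
    intro y hy
    rcases eq_or_ne y 0 with rfl | hy0
    · exact Or.inl rfl
    right
    have hy1 : ‖y‖ < 1 := by simpa using hy
    have hy0' : 0 < ‖y‖ := norm_pos_iff.mpr hy0
    have hex : ∃ k : ℕ, (2:ℝ)⁻¹ ^ (k+1) ≤ ‖y‖ := by
      obtain ⟨k, hk⟩ := exists_pow_lt_of_lt_one hy0' (by norm_num : (2:ℝ)⁻¹ < 1)
      refine ⟨k, le_trans ?_ hk.le⟩
      apply pow_le_pow_of_le_one (by norm_num) (by norm_num) (by omega)
    classical
    set k := Nat.find hex with hk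
    refine mem_iUnion.mpr ⟨k, ?_, ?_⟩
    · simp only [Metric.mem_closedBall, dist_zero_right]
      rcases Nat.eq_zero_or_pos k with h0 | hpos
      · rw [h0]; simpa using hy1.le
      · have h1 := Nat.find_min hex (m := k - 1) (by omega)
        have h2 : ‖y‖ ≤ (2:ℝ)⁻¹ ^ (k - 1 + 1) := (lt_of_not_ge h1).le
        rwa [Nat.sub_add_cancel hpos] at h2
    · simp only [Metric.mem_ball, dist_zero_right, not_lt]
      exact Nat.find_spec hex
  calc ∫⁻ y in Metric.ball (0 : En n) 1, f y
      ≤ ∫⁻ y in ({(0:En n)} ∪ ⋃ k, A k), f y := lintegral_mono_set hsub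
    _ ≤ (∫⁻ y in {(0:En n)}, f y) + ∫⁻ y in ⋃ k, A k, f y := lintegral_union_le _ _ _
    _ ≤ 0 + ∑' k, ∫⁻ y in A k, f y := by
        gcongr
        · have h0 : volume ({(0:En n)} : Set (En n)) = 0 := measure_singleton 0
          simp [Measure.restrict_eq_zero.mpr h0]
        · exact lintegral_iUnion_le _ _
    _ < ∞ := by
        rw [zero_add]
        have hbound : ∀ k, ∫⁻ y in A k, f y ≤
            ENNReal.ofReal (((2:ℝ)⁻¹ ^ (β - n)) * ((2:ℝ)⁻¹ ^ β) ^ k) *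
              volume (Metric.ball (0:En n) 1) := by
          intro k
          have hmeas : MeasurableSet (A k) :=
            measurableSet_closedBall.diff measurableSet_ball
          have hstep : ∫⁻ y in A k, f y ≤
              ∫⁻ _ in A k, ENNReal.ofReal (((2:ℝ)⁻¹ ^ (k+1) : ℝ) ^ (β - (n:ℝ))) := by
            refine setLIntegral_mono' hmeas fun y hy => ?_
            apply ENNReal.ofReal_le_ofReal
            apply Real.rpow_le_rpow_of_nonpos (by positivity) ?_ (by push_cast; linarith)
            have := hy.2
            simpa [Metric.mem_ball, dist_zero_right, not_lt] using this
          refine hstep.trans ?_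
          rw [setLIntegral_const]
          have hAvol : volume (A k) ≤
              ENNReal.ofReal (((2:ℝ)⁻¹ ^ k) ^ (n:ℕ)) * volume (Metric.ball (0:En n) 1) := by
            calc volume (A k) ≤ volume (Metric.closedBall (0 : En n) ((2:ℝ)⁻¹ ^ k)) :=
                  measure_mono diff_subset
              _ = ENNReal.ofReal (((2:ℝ)⁻¹ ^ k) ^ Module.finrank ℝ (En n)) *
                    volume (Metric.ball (0:En n) 1) := Measure.addHaar_closedBall _ _ (by positivity)
              _ = _ := by rw [finrank_euclideanSpace_fin]
          calc ENNReal.ofReal (((2:ℝ)⁻¹ ^ (k+1) : ℝ) ^ (β - (n:ℝ))) * volume (A k)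
              ≤ ENNReal.ofReal (((2:ℝ)⁻¹ ^ (k+1) : ℝ) ^ (β - (n:ℝ))) *
                  (ENNReal.ofReal (((2:ℝ)⁻¹ ^ k) ^ (n:ℕ)) * volume (Metric.ball (0:En n) 1)) := by
                gcongr
            _ = ENNReal.ofReal (((2:ℝ)⁻¹ ^ (k+1) : ℝ) ^ (β - (n:ℝ)) * ((2:ℝ)⁻¹ ^ k) ^ (n:ℕ)) *
                  volume (Metric.ball (0:En n) 1) := by
                rw [← mul_assoc, ← ENNReal.ofReal_mul (by positivity)]
            _ = _ := by
                congr 2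
                have h2 : (0:ℝ) < 2⁻¹ := by norm_num
                rw [← Real.rpow_natCast ((2:ℝ)⁻¹) (k+1), ← Real.rpow_natCast ((2:ℝ)⁻¹ ^ k) n,
                  ← Real.rpow_natCast ((2:ℝ)⁻¹) k,
                  ← Real.rpow_mul h2.le, ← Real.rpow_mul h2.le, ← Real.rpow_add h2,
                  ← Real.rpow_natCast ((2:ℝ)⁻¹ ^ β) k, ← Real.rpow_mul h2.le,
                  ← Real.rpow_add h2]
                congr 1
                push_cast
                ring
        calc (∑' k, ∫⁻ y in A k, f y)
            ≤ ∑' k, ENNReal.ofReal (((2:ℝ)⁻¹ ^ (β - n)) * ((2:ℝ)⁻¹ ^ β) ^ k) *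
                volume (Metric.ball (0:En n) 1) := ENNReal.tsum_le_tsum hbound
          _ = (∑' k, ENNReal.ofReal ((2:ℝ)⁻¹ ^ (β - n)) * (ENNReal.ofReal ((2:ℝ)⁻¹ ^ β)) ^ k) *
                volume (Metric.ball (0:En n) 1) := by
              rw [ENNReal.tsum_mul_right]
              congr 1
              refine tsum_congr fun k => ?_
              rw [ENNReal.ofReal_mul (by positivity), ENNReal.ofReal_pow (by positivity)]
          _ = ENNReal.ofReal ((2:ℝ)⁻¹ ^ (β - n)) * (1 - ENNReal.ofReal ((2:ℝ)⁻¹ ^ β))⁻¹ *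
                volume (Metric.ball (0:En n) 1) := by
              rw [ENNReal.tsum_mul_left, ENNReal.tsum_geometric]
          _ < ∞ := by
              have hr : ENNReal.ofReal ((2:ℝ)⁻¹ ^ β) < 1 := by
                rw [← ENNReal.ofReal_one]
                exact ENNReal.ofReal_lt_ofReal_iff_of_nonneg (by positivity) |>.mpr
                  (Real.rpow_lt_one (by norm_num) (by norm_num) hβ0)
              refine ENNReal.mul_lt_top (ENNReal.mul_lt_top ENNReal.ofReal_lt_top ?_)
                measure_ball_lt_top
              simp [ENNReal.inv_lt_top, tsub_pos_iff_lt, hr]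

lemma riesz_ball_eq {n : ℕ} {β : ℝ} (x : En n) {r : ℝ} (hr : 0 < r) :
    ∫⁻ y in Metric.ball x r, ENNReal.ofReal (‖y - x‖ ^ (β - (n : ℝ))) =
      ENNReal.ofReal (r ^ n) * (ENNReal.ofReal (r ^ (β - (n : ℝ))) *
        ∫⁻ z in Metric.ball (0 : En n) 1, ENNReal.ofReal (‖z‖ ^ (β - (n : ℝ)))) := by
  have hbase : Measurable fun z : En n => ENNReal.ofReal (‖z‖ ^ (β - (n:ℝ))) := by fun_prop
  set G : En n → ℝ≥0∞ :=
    (Metric.ball (0 : En n) r).indicator fun z => ENNReal.ofReal (‖z‖ ^ (β - (n:ℝ))) with hG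
  have hGmeas : Measurable G := hbase.indicator Metric.isOpen_ball.measurableSet
  have step1 : ∫⁻ y in Metric.ball x r, ENNReal.ofReal (‖y - x‖ ^ (β - (n : ℝ))) =
      ∫⁻ y, G (y + (-x)) := by
    rw [← lintegral_indicator Metric.isOpen_ball.measurableSet]
    congr 1
    ext y
    rw [hG]
    by_cases hy : y ∈ Metric.ball x r
    · have hy' : y + -x ∈ Metric.ball (0 : En n) r := by
        simpa [Metric.mem_ball, dist_eq_norm, sub_eq_add_neg] using hy
      rw [indicator_of_mem hy, indicator_of_mem hy']
      simp [sub_eq_add_neg]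
    · have hy' : y + -x ∉ Metric.ball (0 : En n) r := by
        simpa [Metric.mem_ball, dist_eq_norm, sub_eq_add_neg] using hy
      rw [indicator_of_notMem hy, indicator_of_notMem hy']
  have step2 : ∫⁻ y, G (y + (-x)) = ∫⁻ y, G y := lintegral_add_right_eq_self G (-x)
  have step3 : ∫⁻ y, G y = ENNReal.ofReal (|r| ^ n) * ∫⁻ z, G (r • z) := by
    rw [← lintegral_map hGmeas (measurable_const_smul r), Measure.map_addHaar_smul volume hr.ne',
      lintegral_smul_measure, smul_eq_mul, ← mul_assoc, ← ENNReal.ofReal_mul (by positivity)]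
    rw [finrank_euclideanSpace_fin]
    rw [show |r| ^ n * |(r ^ n)⁻¹| = 1 from by
      rw [abs_inv, abs_pow]; field_simp]
    rw [ENNReal.ofReal_one, one_mul]
  have step4 : ∀ z : En n, G (r • z) = ENNReal.ofReal (r ^ (β - (n:ℝ))) *
      (Metric.ball (0 : En n) 1).indicator
        (fun z => ENNReal.ofReal (‖z‖ ^ (β - (n:ℝ)))) z := by
    intro z
    rw [hG]
    by_cases hz : z ∈ Metric.ball (0 : En n) 1
    · have hz' : r • z ∈ Metric.ball (0 : En n) r := by
        simp only [Metric.mem_ball, dist_zero_right] at hz ⊢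
        rw [norm_smul, Real.norm_eq_abs, abs_of_pos hr]
        calc r * ‖z‖ < r * 1 := by exact mul_lt_mul_of_pos_left hz hr
          _ = r := mul_one r
      rw [indicator_of_mem hz', indicator_of_mem hz]
      rw [norm_smul, Real.norm_eq_abs, abs_of_pos hr,
        Real.mul_rpow hr.le (norm_nonneg z),
        ENNReal.ofReal_mul (Real.rpow_nonneg hr.le _)]
    · have hz' : r • z ∉ Metric.ball (0 : En n) r := by
        simp only [Metric.mem_ball, dist_zero_right, not_lt] at hz ⊢
        rw [norm_smul, Real.norm_eq_abs, abs_of_pos hr]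
        calc r = r * 1 := (mul_one r).symm
          _ ≤ r * ‖z‖ := by exact mul_le_mul_of_nonneg_left hz hr.le
      rw [indicator_of_notMem hz', indicator_of_notMem hz, mul_zero]
  rw [step1, step2, step3, abs_of_pos hr]
  congr 1
  simp_rw [step4]
  rw [lintegral_const_mul _ (hbase.indicator Metric.isOpen_ball.measurableSet),
    lintegral_indicator Metric.isOpen_ball.measurableSet]

lemma poisson_smul {n : ℕ} {α t : ℝ} (ht : 0 < t) (u : En n) :
    poissonKernelPT n α t (t • u) =
      (Real.Gamma (((n : ℝ) + α) / 2) / (Real.pi ^ ((n : ℝ) / 2) * Real.Gamma (α / 2))) *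
        t ^ (-(n : ℝ)) * (‖u‖ ^ 2 + 1) ^ (-(((n : ℝ) + α) / 2)) := by
  set c := Real.Gamma (((n : ℝ) + α) / 2) / (Real.pi ^ ((n : ℝ) / 2) * Real.Gamma (α / 2))
  set e := ((n : ℝ) + α) / 2 with he
  have hA : (0 : ℝ) < ‖u‖ ^ 2 + 1 := by positivity
  have hnorm : ‖t • u‖ = t * ‖u‖ := by
    rw [norm_smul, Real.norm_eq_abs, abs_of_pos ht]
  unfold poissonKernelPT
  rw [hnorm, mul_pow, show t ^ 2 * ‖u‖ ^ 2 + t ^ 2 = t ^ 2 * (‖u‖ ^ 2 + 1) by ring,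
    Real.mul_rpow (by positivity) hA.le, ← Real.rpow_natCast t 2, ← Real.rpow_mul ht.le,
    div_eq_mul_inv, mul_inv, ← Real.rpow_neg ht.le, ← Real.rpow_neg hA.le,
    show c * t ^ α * (t ^ (-((2:ℕ) * e)) * (‖u‖ ^ 2 + 1) ^ (-e)) =
      c * (t ^ α * t ^ (-((2:ℕ) * e))) * (‖u‖ ^ 2 + 1) ^ (-e) from by ring,
    ← Real.rpow_add ht]
  congr 2
  rw [he]
  push_cast
  ring

lemma kernel_mass {n : ℕ} {α t : ℝ} (hα0 : 0 < α) (ht : 0 < t) :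
    ∫⁻ y : En n, ENNReal.ofReal (poissonKernelPT n α t y) =
      ENNReal.ofReal
        (Real.Gamma (((n : ℝ) + α) / 2) / (Real.pi ^ ((n : ℝ) / 2) * Real.Gamma (α / 2))) *
      ∫⁻ u : En n, ENNReal.ofReal ((‖u‖ ^ 2 + 1) ^ (-(((n : ℝ) + α) / 2))) := by
  set c := Real.Gamma (((n : ℝ) + α) / 2) / (Real.pi ^ ((n : ℝ) / 2) * Real.Gamma (α / 2)) with hc
  have hcpos : 0 < c := by
    apply div_pos (Real.Gamma_pos_of_pos (by positivity))
    exact mul_pos (Real.rpow_pos_of_pos Real.pi_pos _)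
      (Real.Gamma_pos_of_pos (by linarith))
  have hmeas : Measurable fun y : En n => ENNReal.ofReal (poissonKernelPT n α t y) := by
    have hb : Continuous fun y : En n => (‖y‖ ^ 2 + t ^ 2) ^ (((n : ℝ) + α) / 2) :=
      ((continuous_norm.pow 2).add continuous_const).rpow_const
        (fun y => Or.inl (ne_of_gt (add_pos_of_nonneg_of_pos (sq_nonneg _) (pow_pos ht 2))))
    unfold poissonKernelPT
    exact ((continuous_const.div hb (fun y => by positivity)).measurable).ennreal_ofReal
  have hgmeas : Measurable fun u : En n =>
      ENNReal.ofReal ((‖u‖ ^ 2 + 1) ^ (-(((n : ℝ) + α) / 2))) :=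
    ((((continuous_norm.pow 2).add continuous_const).rpow_const
        (fun y => Or.inl (ne_of_gt (add_pos_of_nonneg_of_pos (sq_nonneg _) one_pos)))).measurable).ennreal_ofReal
  rw [my_lintegral_comp_smul' _ hmeas ht.ne']
  have : ∀ u : En n, ENNReal.ofReal (poissonKernelPT n α t (t • u)) =
      ENNReal.ofReal (c * t ^ (-(n : ℝ))) *
        ENNReal.ofReal ((‖u‖ ^ 2 + 1) ^ (-(((n : ℝ) + α) / 2))) := by
    intro u
    rw [poisson_smul ht u, ← hc,
      ENNReal.ofReal_mul (mul_nonneg hcpos.le (Real.rpow_nonneg ht.le _))]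
  simp_rw [this]
  rw [lintegral_const_mul _ hgmeas, ← mul_assoc, ← ENNReal.ofReal_mul (by positivity),
    abs_of_pos ht]
  congr 2
  rw [← Real.rpow_natCast t n, mul_comm c, ← mul_assoc, ← Real.rpow_add ht,
    add_neg_cancel, Real.rpow_zero, one_mul]

end KernelRiesz

set_option maxHeartbeats 1600000 in
open KernelRiesz in
/-- Kernel–Riesz potential estimate:
`∫_{ℝⁿ} p^α_t(y) |y-x|^{β-n} dy ≤ C (t² + |x|²)^{(β-n)/2}`. -/
theorem kernel_riesz_estimate
    (n : ℕ) (hn : 1 ≤ n) (α β : ℝ) (hα0 : 0 < α) (hα2 : α < 2)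
    (hβ0 : 0 < β) (hβn : β < n) :
    ∃ C : ℝ, 0 < C ∧ ∀ (x : En n) (t : ℝ), 0 < t →
      (∫⁻ y, ENNReal.ofReal (poissonKernelPT n α t y * ‖y - x‖ ^ (β - (n : ℝ)))) ≤
        ENNReal.ofReal (C * (t ^ 2 + ‖x‖ ^ 2) ^ ((β - (n : ℝ)) / 2)) := by
  have hβn' : β - (n:ℝ) ≤ 0 := by
    have : (β:ℝ) < n := hβn
    linarith
  set c := Real.Gamma (((n : ℝ) + α) / 2) / (Real.pi ^ ((n : ℝ) / 2) * Real.Gamma (α / 2)) with hc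
  have hcpos : 0 < c := by
    apply div_pos (Real.Gamma_pos_of_pos (by positivity))
    exact mul_pos (Real.rpow_pos_of_pos Real.pi_pos _)
      (Real.Gamma_pos_of_pos (by linarith))
  set e := ((n : ℝ) + α) / 2 with he
  have hepos : 0 < e := by
    rw [he]; positivity
  -- the mass constant
  set M := ∫⁻ u : En n, ENNReal.ofReal ((‖u‖ ^ 2 + 1) ^ (-(((n : ℝ) + α) / 2))) with hM
  have hMtop : M < ∞ := by
    have hint : Integrable (fun u : En n => ((1:ℝ) + ‖u‖ ^ 2) ^ (-((n:ℝ)+α) / 2)) volume := by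
      apply integrable_rpow_neg_one_add_norm_sq
      rw [finrank_euclideanSpace_fin]; linarith
    refine lt_of_le_of_lt ?_ hint.2
    calc M = ∫⁻ u : En n, ENNReal.ofReal (((1:ℝ) + ‖u‖^2) ^ (-((n:ℝ)+α)/2)) := by
          rw [hM]; congr 1; funext u; rw [add_comm (‖u‖^2) 1, neg_div]
      _ ≤ _ := lintegral_ofReal_le_lintegral_enorm _
  set Mr := M.toReal with hMrdef
  have hMreq : M = ENNReal.ofReal Mr := (ENNReal.ofReal_toReal hMtop.ne).symm
  have hMr0 : 0 ≤ Mr := ENNReal.toReal_nonneg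
  -- the Riesz constant
  set J := ∫⁻ z in Metric.ball (0 : En n) 1, ENNReal.ofReal (‖z‖ ^ (β - (n : ℝ))) with hJ
  have hJtop : J < ∞ := riesz_ball_lt_top hn hβ0 hβn
  set Jr := J.toReal with hJrdef
  have hJreq : J = ENNReal.ofReal Jr := (ENNReal.ofReal_toReal hJtop.ne).symm
  have hJr0 : 0 ≤ Jr := ENNReal.toReal_nonneg
  refine ⟨c * 4 ^ e * 2 ^ (-β) * Jr + c * 2 ^ ((n:ℝ) - β) * Mr + 1, ?_, ?_⟩
  · have h1 : 0 ≤ c * 4 ^ e * 2 ^ (-β) * Jr :=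
      mul_nonneg (mul_nonneg (mul_nonneg hcpos.le (Real.rpow_nonneg (by norm_num) _))
        (Real.rpow_nonneg (by norm_num) _)) hJr0
    have h2 : 0 ≤ c * 2 ^ ((n:ℝ) - β) * Mr :=
      mul_nonneg (mul_nonneg hcpos.le (Real.rpow_nonneg (by norm_num) _)) hMr0
    linarith
  intro x t ht
  set S := t ^ 2 + ‖x‖ ^ 2 with hS
  have hSpos : 0 < S := by rw [hS]; positivity
  set R := Real.sqrt S with hRdef
  have hRpos : 0 < R := Real.sqrt_pos.mpr hSpos
  have hR2 : R ^ 2 = S := Real.sq_sqrt hSpos.le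
  have hhalfpos : 0 < R / 2 := by positivity
  -- rpow conversion helpers
  have hR2S : ∀ γ : ℝ, R ^ γ = S ^ (γ / 2) := by
    intro γ
    rw [hRdef, Real.sqrt_eq_rpow, ← Real.rpow_mul hSpos.le]
    congr 1; ring
  have hhalf : ∀ γ : ℝ, (R / 2) ^ γ = S ^ (γ / 2) * 2 ^ (-γ) := by
    intro γ
    rw [Real.div_rpow hRpos.le (by norm_num : (0:ℝ) ≤ 2), hR2S γ,
      Real.rpow_neg (by norm_num : (0:ℝ) ≤ 2), div_eq_mul_inv]
  have hSrw : ∀ a b : ℝ, S ^ a * S ^ b = S ^ (a + b) := fun a b => (Real.rpow_add hSpos a b).symm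
  have h2rw : ∀ a b : ℝ, (2:ℝ) ^ a * 2 ^ b = 2 ^ (a + b) :=
    fun a b => (Real.rpow_add (by norm_num) a b).symm
  -- measurability
  have hpmeas : Measurable fun y : En n => ENNReal.ofReal (poissonKernelPT n α t y) := by
    have hb : Continuous fun y : En n => (‖y‖ ^ 2 + t ^ 2) ^ (((n : ℝ) + α) / 2) :=
      ((continuous_norm.pow 2).add continuous_const).rpow_const
        (fun y => Or.inl (ne_of_gt (add_pos_of_nonneg_of_pos (sq_nonneg _) (pow_pos ht 2))))
    unfold poissonKernelPT
    exact ((continuous_const.div hb (fun y => by positivity)).measurable).ennreal_ofReal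
  have hrmeas : Measurable fun y : En n => ENNReal.ofReal (‖y - x‖ ^ (β - (n:ℝ))) := by fun_prop
  have hp0 : ∀ y : En n, 0 ≤ poissonKernelPT n α t y := by
    intro y
    unfold poissonKernelPT
    rw [← hc]
    apply div_nonneg (mul_nonneg hcpos.le (Real.rpow_nonneg ht.le _))
      (Real.rpow_nonneg (by positivity) _)
  -- pointwise bound on the ball
  have hpoint_ball : ∀ y ∈ Metric.ball x (R / 2),
      poissonKernelPT n α t y ≤ c * 4 ^ e * S ^ (-((n:ℝ) / 2)) := by
    intro y hy
    have hyx : ‖y - x‖ < R / 2 := by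
      simpa [Metric.mem_ball, dist_eq_norm] using hy
    have hxy : ‖x‖ ≤ ‖y‖ + R / 2 := by
      have h1 : ‖x‖ - ‖y‖ ≤ ‖x - y‖ := norm_sub_norm_le x y
      have h2 : ‖x - y‖ = ‖y - x‖ := norm_sub_rev x y
      linarith [hyx.le, h1, h2 ▸ h1]
    have hkey : S / 4 ≤ ‖y‖ ^ 2 + t ^ 2 := by
      have hb2 : ‖x‖ ^ 2 ≤ S := by rw [hS]; nlinarith [sq_nonneg t]
      have hRS : R ^ 2 = S := hR2
      nlinarith [norm_nonneg y, norm_nonneg x, sq_nonneg (2 * ‖y‖ - R), hRpos.le]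
    have hden : (S / 4) ^ e ≤ (‖y‖ ^ 2 + t ^ 2) ^ e :=
      Real.rpow_le_rpow (by positivity) hkey hepos.le
    have htS : t ^ α ≤ S ^ (α / 2) := by
      have h1 : t ≤ R := by
        rw [hRdef]
        rw [Real.le_sqrt ht.le hSpos.le]
        rw [hS]; nlinarith [sq_nonneg ‖x‖]
      calc t ^ α ≤ R ^ α := Real.rpow_le_rpow ht.le h1 hα0.le
        _ = S ^ (α / 2) := hR2S α
    have hstep : poissonKernelPT n α t y ≤ c * t ^ α / (S / 4) ^ e := by
      unfold poissonKernelPT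
      rw [← hc, ← he]
      apply div_le_div_of_nonneg_left (mul_nonneg hcpos.le (Real.rpow_nonneg ht.le _))
        (Real.rpow_pos_of_pos (by positivity) _) hden
    refine hstep.trans ?_
    have heq : (S / 4 : ℝ) ^ e = S ^ e * 4 ^ (-e) := by
      rw [Real.div_rpow hSpos.le (by norm_num : (0:ℝ) ≤ 4),
        Real.rpow_neg (by norm_num : (0:ℝ) ≤ 4), div_eq_mul_inv]
    rw [heq]
    rw [div_eq_mul_inv, mul_inv, ← Real.rpow_neg hSpos.le, ← Real.rpow_neg (by norm_num : (0:ℝ) ≤ 4),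
      neg_neg]
    calc c * t ^ α * (S ^ (-e) * 4 ^ e)
        ≤ c * S ^ (α / 2) * (S ^ (-e) * 4 ^ e) := by
          apply mul_le_mul_of_nonneg_right (mul_le_mul_of_nonneg_left htS hcpos.le)
          exact mul_nonneg (Real.rpow_nonneg hSpos.le _) (Real.rpow_nonneg (by norm_num) _)
      _ = c * 4 ^ e * (S ^ (α / 2) * S ^ (-e)) := by ring
      _ = c * 4 ^ e * S ^ (-((n:ℝ) / 2)) := by
          rw [hSrw]
          congr 1
          rw [he]; ring
  -- split the integral
  rw [← lintegral_add_compl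
    (fun y => ENNReal.ofReal (poissonKernelPT n α t y * ‖y - x‖ ^ (β - (n:ℝ))))
    (Metric.isOpen_ball.measurableSet : MeasurableSet (Metric.ball x (R / 2)))]
  -- bound on the ball
  have hAbound : (∫⁻ y in Metric.ball x (R / 2),
      ENNReal.ofReal (poissonKernelPT n α t y * ‖y - x‖ ^ (β - (n:ℝ)))) ≤
      ENNReal.ofReal (c * 4 ^ e * 2 ^ (-β) * Jr * S ^ ((β - (n:ℝ)) / 2)) := by
    have h1 : (∫⁻ y in Metric.ball x (R / 2),
        ENNReal.ofReal (poissonKernelPT n α t y * ‖y - x‖ ^ (β - (n:ℝ)))) ≤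
        ∫⁻ y in Metric.ball x (R / 2),
          ENNReal.ofReal (c * 4 ^ e * S ^ (-((n:ℝ) / 2))) *
            ENNReal.ofReal (‖y - x‖ ^ (β - (n:ℝ))) := by
      refine setLIntegral_mono' Metric.isOpen_ball.measurableSet fun y hy => ?_
      rw [← ENNReal.ofReal_mul (mul_nonneg (mul_nonneg hcpos.le
        (Real.rpow_nonneg (by norm_num) _)) (Real.rpow_nonneg hSpos.le _))]
      exact ENNReal.ofReal_le_ofReal (mul_le_mul_of_nonneg_right (hpoint_ball y hy)
        (Real.rpow_nonneg (norm_nonneg _) _))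
    refine h1.trans ?_
    rw [lintegral_const_mul _ hrmeas, riesz_ball_eq x hhalfpos, ← hJ, hJreq]
    rw [← ENNReal.ofReal_mul (Real.rpow_nonneg hhalfpos.le _),
      ← ENNReal.ofReal_mul (by positivity),
      ← ENNReal.ofReal_mul (mul_nonneg (mul_nonneg hcpos.le
        (Real.rpow_nonneg (by norm_num) _)) (Real.rpow_nonneg hSpos.le _))]
    apply ENNReal.ofReal_le_ofReal
    apply le_of_eq
    rw [← Real.rpow_natCast (R / 2) n, hhalf ((n:ℕ):ℝ), hhalf (β - (n:ℝ))]
    calc c * 4 ^ e * S ^ (-((n:ℝ) / 2)) *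
          (S ^ ((n:ℝ) / 2) * 2 ^ (-(n:ℝ)) * (S ^ ((β - (n:ℝ)) / 2) * 2 ^ (-(β - (n:ℝ))) * Jr))
        = c * 4 ^ e * Jr * ((S ^ (-((n:ℝ) / 2)) * S ^ ((n:ℝ) / 2)) * S ^ ((β - (n:ℝ)) / 2)) *
            (2 ^ (-(n:ℝ)) * 2 ^ (-(β - (n:ℝ)))) := by ring
      _ = c * 4 ^ e * Jr * ((S ^ (-((n:ℝ) / 2) + (n:ℝ) / 2)) * S ^ ((β - (n:ℝ)) / 2)) *
            2 ^ (-(n:ℝ) + -(β - (n:ℝ))) := by rw [hSrw, h2rw]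
      _ = c * 4 ^ e * 2 ^ (-β) * Jr * S ^ ((β - (n:ℝ)) / 2) := by
          rw [show -((n:ℝ) / 2) + (n:ℝ) / 2 = 0 from by ring, Real.rpow_zero, one_mul,
            show -(n:ℝ) + -(β - (n:ℝ)) = -β from by ring]
          ring
  -- bound off the ball
  have hBbound : (∫⁻ y in (Metric.ball x (R / 2))ᶜ,
      ENNReal.ofReal (poissonKernelPT n α t y * ‖y - x‖ ^ (β - (n:ℝ)))) ≤
      ENNReal.ofReal (c * 2 ^ ((n:ℝ) - β) * Mr * S ^ ((β - (n:ℝ)) / 2)) := by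
    have h1 : (∫⁻ y in (Metric.ball x (R / 2))ᶜ,
        ENNReal.ofReal (poissonKernelPT n α t y * ‖y - x‖ ^ (β - (n:ℝ)))) ≤
        ∫⁻ y in (Metric.ball x (R / 2))ᶜ,
          ENNReal.ofReal ((R / 2) ^ (β - (n:ℝ))) *
            ENNReal.ofReal (poissonKernelPT n α t y) := by
      refine setLIntegral_mono' Metric.isOpen_ball.measurableSet.compl fun y hy => ?_
      have hdist : R / 2 ≤ ‖y - x‖ := by
        have : y ∉ Metric.ball x (R / 2) := hy
        simpa [Metric.mem_ball, dist_eq_norm, not_lt] using this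
      have hle : ‖y - x‖ ^ (β - (n:ℝ)) ≤ (R / 2) ^ (β - (n:ℝ)) :=
        Real.rpow_le_rpow_of_nonpos hhalfpos hdist hβn'
      rw [← ENNReal.ofReal_mul (Real.rpow_nonneg hhalfpos.le _)]
      apply ENNReal.ofReal_le_ofReal
      calc poissonKernelPT n α t y * ‖y - x‖ ^ (β - (n:ℝ))
          ≤ poissonKernelPT n α t y * (R / 2) ^ (β - (n:ℝ)) :=
            mul_le_mul_of_nonneg_left hle (hp0 y)
        _ = (R / 2) ^ (β - (n:ℝ)) * poissonKernelPT n α t y := mul_comm _ _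
    refine h1.trans ?_
    calc (∫⁻ y in (Metric.ball x (R / 2))ᶜ,
          ENNReal.ofReal ((R / 2) ^ (β - (n:ℝ))) * ENNReal.ofReal (poissonKernelPT n α t y))
        ≤ ∫⁻ y, ENNReal.ofReal ((R / 2) ^ (β - (n:ℝ))) *
            ENNReal.ofReal (poissonKernelPT n α t y) := setLIntegral_le_lintegral _ _
      _ = ENNReal.ofReal ((R / 2) ^ (β - (n:ℝ))) *
            ∫⁻ y, ENNReal.ofReal (poissonKernelPT n α t y) := lintegral_const_mul _ hpmeas
      _ = ENNReal.ofReal ((R / 2) ^ (β - (n:ℝ))) * (ENNReal.ofReal c * M) := by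
          rw [kernel_mass hα0 ht, ← hc, ← hM]
      _ = ENNReal.ofReal (c * 2 ^ ((n:ℝ) - β) * Mr * S ^ ((β - (n:ℝ)) / 2)) := by
          rw [hMreq, ← ENNReal.ofReal_mul hcpos.le,
            ← ENNReal.ofReal_mul (Real.rpow_nonneg hhalfpos.le _)]
          congr 1
          rw [hhalf (β - (n:ℝ))]
          rw [show -(β - (n:ℝ)) = (n:ℝ) - β from by ring]
          ring
  refine le_trans (add_le_add hAbound hBbound) ?_
  have hSexp : 0 ≤ S ^ ((β - (n:ℝ)) / 2) := Real.rpow_nonneg hSpos.le _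
  have hA0 : 0 ≤ c * 4 ^ e * 2 ^ (-β) * Jr * S ^ ((β - (n:ℝ)) / 2) :=
    mul_nonneg (mul_nonneg (mul_nonneg (mul_nonneg hcpos.le
      (Real.rpow_nonneg (by norm_num) _)) (Real.rpow_nonneg (by norm_num) _)) hJr0) hSexp
  have hB0 : 0 ≤ c * 2 ^ ((n:ℝ) - β) * Mr * S ^ ((β - (n:ℝ)) / 2) :=
    mul_nonneg (mul_nonneg (mul_nonneg hcpos.le
      (Real.rpow_nonneg (by norm_num) _)) hMr0) hSexp
  rw [← ENNReal.ofReal_add hA0 hB0]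
  apply ENNReal.ofReal_le_ofReal
  nlinarith [hSexp]


end
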